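/- arXiv:2312.01189 — 8 statements merged into one kernel-verified Lean document; each statement's English description precedes it below -/
import Mathlib

section
/- Let f be a nonzero Laurent polynomial with nonnegative integer coefficients. If f(1) is a prime number, then f is irreducible in the semiring ℕ[x^{±1}] of Laurent polynomials with nonnegative integer coefficients. -/
/-- The semiring of Laurent polynomials with nonnegative integer coefficients, ℕ[x^{±1}]. -/
abbrev NL : Type := AddMonoidAlgebra ℕ ℤ

/-- The monomial `c • x^k` in ℕ[x^{±1}]. -/
noncomputable def mono (k : ℤ) (c : ℕ) : NL := AddMonoidAlgebra.single k c

/-- Evaluation at 1, i.e. the sum of the coefficients. -/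
def evalOne (f : NL) : ℕ := f.coeff.sum fun _ c => c

/-- A monomial is `c x^k` with `c ≥ 1`. -/
def IsMonomial (f : NL) : Prop := ∃ (c : ℕ) (k : ℤ), 0 < c ∧ f = mono k c

/-- A nonzero `f` is monolithic if any factorization has a monomial factor. -/
def Monolithic (f : NL) : Prop :=
  f ≠ 0 ∧ ∀ g h : NL, f = g * h → IsMonomial g ∨ IsMonomial h

/-- `f` is hyper-monolithic: it has ≥ 2 terms, written with positive coefficients and
strictly decreasing exponents `k 0 > ⋯ > k n`, and either the first gap is strictly
smaller than every later gap, or the last gap is strictly smaller than every earlier gap. -/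
def HyperMonolithic (f : NL) : Prop :=
  ∃ (n : ℕ) (k : ℕ → ℤ) (c : ℕ → ℕ),
    1 ≤ n ∧ (∀ i j, i < j → j ≤ n → k j < k i) ∧ (∀ i, i ≤ n → 0 < c i) ∧
    f = ∑ i ∈ Finset.range (n + 1), mono (k i) (c i) ∧
    ((∀ i, 1 ≤ i → i + 1 ≤ n → k 0 - k 1 < k i - k (i + 1)) ∨
     (∀ j, j + 2 ≤ n → k (n - 1) - k n < k j - k (j + 1)))


noncomputable def E : NL →+* ℕ :=
  AddMonoidAlgebra.liftNCRingHom (RingHom.id ℕ) 1 (fun _ _ => Commute.all _ _)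

lemma E_eq (f : NL) : E f = evalOne f := by
  show AddMonoidAlgebra.liftNC _ _ f = _
  erw [AddMonoidAlgebra.liftNC, Finsupp.liftAddHom_apply]
  simp [evalOne, Finsupp.sum]

lemma evalOne_mul (g h : NL) : evalOne (g * h) = evalOne g * evalOne h := by
  rw [← E_eq, ← E_eq, ← E_eq, map_mul]

lemma evalOne_one : evalOne (1 : NL) = 1 := by rw [← E_eq, map_one]

lemma unit_of_evalOne_one (a : NL) (ha : evalOne a = 1) : IsUnit a := by
  have hsum : ∑ x ∈ a.coeff.support, a.coeff x = 1 := ha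
  have hne : a.coeff.support.Nonempty := by
    rcases a.coeff.support.eq_empty_or_nonempty with h | h
    · rw [h] at hsum; simp at hsum
    · exact h
  obtain ⟨k, hk⟩ := hne
  have hk1 : 1 ≤ a.coeff k := Nat.one_le_iff_ne_zero.2 (Finsupp.mem_support_iff.1 hk)
  have hsingle : a = AddMonoidAlgebra.single k 1 := by
    have hle : ∑ x ∈ a.coeff.support, a.coeff x ≥ a.coeff k := Finset.single_le_sum (fun i _ => Nat.zero_le _) hk
    have hak : a.coeff k = 1 := le_antisymm (hsum ▸ hle) hk1
    ext m
    by_cases hm : m = k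
    · subst hm; simp [hak, Finsupp.single_eq_same]
    · have hm0 : a.coeff m = 0 := by
        by_contra hm0
        have hmem : m ∈ a.coeff.support := Finsupp.mem_support_iff.2 hm0
        have hmem' : m ∈ a.coeff.support.erase k := Finset.mem_erase.2 ⟨hm, hmem⟩
        have : a.coeff k + a.coeff m ≤ ∑ x ∈ a.coeff.support, a.coeff x := by
          calc a.coeff k + a.coeff m ≤ a.coeff k + ∑ x ∈ a.coeff.support.erase k, a.coeff x :=
                Nat.add_le_add_left (Finset.single_le_sum (fun i _ => Nat.zero_le _) hmem') _
            _ = ∑ x ∈ a.coeff.support, a.coeff x := Finset.add_sum_erase a.coeff.support a.coeff hk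
        omega
      simp [hm0, Finsupp.single_apply, Ne.symm hm]
  rw [hsingle]
  refine ⟨⟨AddMonoidAlgebra.single k 1, AddMonoidAlgebra.single (-k) 1, ?_, ?_⟩, rfl⟩
  · rw [AddMonoidAlgebra.single_mul_single, AddMonoidAlgebra.one_def]; norm_num
  · rw [AddMonoidAlgebra.single_mul_single, AddMonoidAlgebra.one_def]; norm_num

/-- If `f ≠ 0` and `f(1)` is prime, then `f` is irreducible in ℕ[x^{±1}]. -/
theorem stmt0 (f : NL) (hf : f ≠ 0) (hp : (evalOne f).Prime) : Irreducible f := by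
  constructor
  · intro hu
    obtain ⟨u, rfl⟩ := hu
    have h1 : evalOne (u : NL) * evalOne (↑u⁻¹ : NL) = 1 := by
      rw [← evalOne_mul, Units.mul_inv, evalOne_one]
    have : evalOne (u : NL) = 1 := Nat.eq_one_of_mul_eq_one_right h1
    rw [this] at hp
    exact hp.one_lt.ne' rfl
  · intro a b hab
    have hmul := evalOne_mul a b
    rw [← hab] at hmul
    rcases hp.eq_one_or_self_of_dvd (evalOne a) ⟨evalOne b, hmul⟩ with h | h
    · exact Or.inl (unit_of_evalOne_one a h)
    · right
      apply unit_of_evalOne_one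
      have hb : evalOne f * evalOne b = evalOne f * 1 := by
        rw [mul_one]; rw [h] at hmul; exact hmul.symm
      exact Nat.eq_of_mul_eq_mul_left hp.pos hb
end

section
/- Let f ∈ ℕ[x^{±1}] be such that f(1) = p + q where p and q are prime numbers. Then f can be written as the sum of two irreducible elements of ℕ[x^{±1}]. -/
lemma E_single (k : ℤ) (c : ℕ) : E (AddMonoidAlgebra.single k c) = c := by
  show AddMonoidAlgebra.liftNC _ _ _ = _
  rw [AddMonoidAlgebra.liftNC_single]; simp

lemma unit_of_evalOne_eq_one (g : NL) (hg : evalOne g = 1) : IsUnit g := by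
  have hsum : ∑ a ∈ g.coeff.support, g.coeff a = 1 := hg
  have hcard : g.coeff.support.card ≤ 1 := by
    calc g.coeff.support.card = ∑ _a ∈ g.coeff.support, 1 := by simp
    _ ≤ ∑ a ∈ g.coeff.support, g.coeff a := Finset.sum_le_sum (fun a ha =>
        Nat.one_le_iff_ne_zero.2 (Finsupp.mem_support_iff.1 ha))
    _ = 1 := hsum
  rcases Nat.le_one_iff_eq_zero_or_eq_one.1 hcard with hc | hc
  · exfalso
    rw [Finset.card_eq_zero, Finsupp.support_eq_empty] at hc
    simp [evalOne, hc] at hg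
  · obtain ⟨a, hfa, hgeq⟩ := Finsupp.card_support_eq_one.1 hc
    have hb : g.coeff a = 1 := by
      rw [evalOne, hgeq, Finsupp.sum_single_index rfl] at hg; exact hg
    have hgeq' : g = AddMonoidAlgebra.single a 1 := by
      rw [← AddMonoidAlgebra.coeff_inj, AddMonoidAlgebra.coeff_single, ← hb]; exact hgeq

    rw [hgeq']
    refine isUnit_iff_exists.2 ⟨AddMonoidAlgebra.single (-a) 1, ?_, ?_⟩ <;>
      rw [AddMonoidAlgebra.single_mul_single] <;>
      simp only [add_neg_cancel, neg_add_cancel, mul_one] <;>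
      exact (AddMonoidAlgebra.one_def).symm

lemma irred_of_prime (g : NL) (hg : (evalOne g).Prime) : Irreducible g := by
  constructor
  · intro hu
    have : IsUnit (E g) := hu.map E
    rw [Nat.isUnit_iff, E_eq] at this
    exact hg.ne_one this
  · intro a b hab
    have : (evalOne a * evalOne b).Prime := by
      rwa [← E_eq, ← E_eq, ← map_mul, ← hab, E_eq]
    rcases Nat.prime_mul_iff.1 this with ⟨_, h1⟩ | ⟨_, h1⟩
    · exact Or.inr (unit_of_evalOne_eq_one b h1)
    · exact Or.inl (unit_of_evalOne_eq_one a h1)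

lemma evalOne_add (g h : NL) : evalOne (g + h) = evalOne g + evalOne h := by
  rw [← E_eq, ← E_eq, ← E_eq, map_add]

noncomputable def toNL (f : ℤ →₀ ℕ) : NL := AddMonoidAlgebra.ofCoeff f

lemma NL_single_add (k : ℤ) (a b : ℕ) :
    (AddMonoidAlgebra.single k (a + b) : NL)
      = AddMonoidAlgebra.single k a + AddMonoidAlgebra.single k b :=
  AddMonoidAlgebra.single_add k a b

lemma NL_single_add_erase (k : ℤ) (h : NL) :
    h = AddMonoidAlgebra.single k (h.coeff k) + toNL (Finsupp.erase k h.coeff) :=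
  (AddMonoidAlgebra.single_add_erase k h).symm

lemma split (f : NL) (m : ℕ) (hm : m ≤ evalOne f) :
    ∃ g h : NL, evalOne g = m ∧ f = g + h := by
  induction m with
  | zero => exact ⟨0, f, by simp [evalOne], by simp⟩
  | succ m ih =>
      obtain ⟨g, h, hg, rfl⟩ := ih (le_of_lt (Nat.lt_of_succ_le hm))
      rw [evalOne_add, hg] at hm
      have hh : 1 ≤ evalOne h := by omega
      have hne : h ≠ 0 := by
        rintro rfl; simp [evalOne] at hh
      obtain ⟨k, hk⟩ := Finsupp.support_nonempty_iff.2 (mt AddMonoidAlgebra.coeff_eq_zero.1 hne)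
      have hk1 : 1 ≤ h.coeff k := Nat.one_le_iff_ne_zero.2 (Finsupp.mem_support_iff.1 hk)
      have hsplit : h = AddMonoidAlgebra.single k 1
          + (AddMonoidAlgebra.single k (h.coeff k - 1) + toNL (Finsupp.erase k h.coeff)) := by
        rw [← add_assoc, ← NL_single_add]
        have : 1 + (h.coeff k - 1) = h.coeff k := by omega
        rw [this]
        exact NL_single_add_erase k h
      refine ⟨g + AddMonoidAlgebra.single k 1,
        AddMonoidAlgebra.single k (h.coeff k - 1) + toNL (Finsupp.erase k h.coeff), ?_, ?_⟩
      · rw [evalOne_add, hg, ← E_eq, E_single]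
      · conv_lhs => rw [hsplit]
        rw [← add_assoc]


/-- If `f(1) = p + q` with `p, q` prime, then `f` is a sum of two irreducibles. -/
theorem stmt2 (f : NL) (p q : ℕ) (hp : p.Prime) (hq : q.Prime)
    (h : evalOne f = p + q) :
    ∃ g h : NL, Irreducible g ∧ Irreducible h ∧ f = g + h := by
  obtain ⟨g, h', hg, rfl⟩ := split f p (by omega)
  have hh' : evalOne h' = q := by
    have := evalOne_add g h'
    omega
  exact ⟨g, h', irred_of_prime g (hg ▸ hp), irred_of_prime h' (hh' ▸ hq), rfl⟩
end

section
/- Let f = Σ_{i=0}^{n} c_i x^{k_i} ∈ ℕ[x^{±1}] with all c_i positive integers, distinct exponents k_0 > ⋯ > k_n, and n ≥ 1 (i.e., |supp(f)| > 1). Then f is irreducible in ℕ[x^{±1}] if and only if f is monolithic and gcd(c_0, …, c_n) = 1. -/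
lemma E_mono (k : ℤ) (c : ℕ) : E (mono k c) = c := by
  show AddMonoidAlgebra.liftNC _ _ (AddMonoidAlgebra.single k c) = c
  rw [AddMonoidAlgebra.liftNC_single]
  exact mul_one c

lemma E_of_isUnit {u : NL} (hu : IsUnit u) : E u = 1 := by
  obtain ⟨v, hv⟩ := hu.exists_right_inv
  have : E u * E v = 1 := by rw [← map_mul, hv, map_one]
  exact Nat.dvd_one.mp ⟨E v, this.symm⟩

lemma single_of_E_eq_one {u : NL} (hu : E u = 1) : ∃ a : ℤ, u = mono a 1 := by
  have hE : E u = ∑ x ∈ u.coeff.support, u.coeff x := by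
    conv_lhs => rw [← AddMonoidAlgebra.sum_coeff_single u]
    rw [Finsupp.sum, map_sum]
    exact Finset.sum_congr rfl fun x _ => E_mono x (u.coeff x)
  rw [hE] at hu
  have hne : u.coeff.support.Nonempty := by
    by_contra h
    rw [Finset.not_nonempty_iff_eq_empty] at h
    rw [h] at hu
    simp at hu
  obtain ⟨a, ha⟩ := hne
  refine ⟨a, ?_⟩
  have hsub : u.coeff.support ⊆ {a} := by
    intro b hb
    simp only [Finset.mem_singleton]
    by_contra hba
    have h1 : u.coeff a + ∑ x ∈ u.coeff.support.erase a, u.coeff x = 1 := by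
      rw [Finset.add_sum_erase _ _ ha]; exact hu
    have hb' : b ∈ u.coeff.support.erase a := Finset.mem_erase.mpr ⟨hba, hb⟩
    have h2 : u.coeff b ≤ ∑ x ∈ u.coeff.support.erase a, u.coeff x :=
      Finset.single_le_sum (fun _ _ => Nat.zero_le _) hb'
    have hua : 1 ≤ u.coeff a := Nat.one_le_iff_ne_zero.mpr (Finsupp.mem_support_iff.mp ha)
    have hub : 1 ≤ u.coeff b := Nat.one_le_iff_ne_zero.mpr (Finsupp.mem_support_iff.mp hb)
    omega
  have hua : u.coeff a = 1 := by
    have : ∑ x ∈ u.coeff.support, u.coeff x = u.coeff a := by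
      rw [Finset.sum_subset hsub]
      · simp
      · intro x hx hxs
        exact Finsupp.notMem_support_iff.mp hxs
    omega
  have : u = AddMonoidAlgebra.single a (u.coeff a) := by
    ext b
    rw [AddMonoidAlgebra.coeff_single]
    rcases eq_or_ne b a with rfl | hb
    · exact Finsupp.single_eq_same.symm
    · rw [Finsupp.single_apply, if_neg (fun h => hb h.symm)]
      by_contra h
      have := hsub (Finsupp.mem_support_iff.mpr h)
      simp at this
      exact hb this
  rw [mono, ← hua]
  exact this

lemma isUnit_mono_one (a : ℤ) : IsUnit (mono a 1) := by
  apply IsUnit.of_mul_eq_one (mono (-a) 1)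
  rw [mono, mono, AddMonoidAlgebra.single_mul_single, one_mul, add_neg_cancel,
    AddMonoidAlgebra.one_def]

lemma isUnit_iff_single {u : NL} : IsUnit u ↔ ∃ a : ℤ, u = mono a 1 := by
  constructor
  · intro h; exact single_of_E_eq_one (E_of_isUnit h)
  · rintro ⟨a, rfl⟩; exact isUnit_mono_one a

/-- For `f = Σ cᵢ x^{kᵢ}` with positive coefficients, strictly decreasing exponents and
`n ≥ 1`: `f` is irreducible iff `f` is monolithic and `gcd(c₀,…,cₙ) = 1`. -/
theorem stmt3 (n : ℕ) (hn : 1 ≤ n) (k : ℕ → ℤ) (c : ℕ → ℕ)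
    (hk : ∀ i j, i < j → j ≤ n → k j < k i) (hc : ∀ i, i ≤ n → 0 < c i)
    (f : NL) (hf : f = ∑ i ∈ Finset.range (n + 1), mono (k i) (c i)) :
    Irreducible f ↔ Monolithic f ∧ (Finset.range (n + 1)).gcd c = 1 := by
  -- injectivity of k on [0,n]
  have hkinj : ∀ i j, i ≤ n → j ≤ n → k i = k j → i = j := by
    intro i j hi hj hij
    rcases lt_trichotomy i j with h | h | h
    · exact absurd hij (ne_of_gt (hk i j h hj))
    · exact h
    · exact absurd hij (ne_of_gt (hk j i h hi)).symm
  -- coefficients of f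
  have hcoeff : ∀ i, i ≤ n → f.coeff (k i) = c i := by
    intro i hi
    rw [hf]
    rw [AddMonoidAlgebra.coeff_sum, Finsupp.finset_sum_apply]
    rw [Finset.sum_eq_single i]
    · exact Finsupp.single_eq_same
    · intro j hj hji
      simp only [mono, AddMonoidAlgebra.coeff_single]
      rw [Finsupp.single_apply]
      rw [if_neg]
      intro h
      exact hji (hkinj j i (Nat.lt_succ_iff.mp (Finset.mem_range.mp hj)) hi h)
    · intro h
      exact absurd (Finset.mem_range.mpr (Nat.lt_succ_of_le hi)) h
  -- E f = sum of coefficients ≥ 2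
  have hEf : E f = ∑ i ∈ Finset.range (n + 1), c i := by
    rw [hf, map_sum]
    exact Finset.sum_congr rfl fun i _ => E_mono _ _
  have hEf2 : 2 ≤ E f := by
    rw [hEf]
    have hsub : ({0, 1} : Finset ℕ) ⊆ Finset.range (n + 1) := by
      intro x hx
      simp only [Finset.mem_insert, Finset.mem_singleton] at hx
      rcases hx with rfl | rfl <;> simp [Finset.mem_range] <;> omega
    calc 2 = ∑ i ∈ ({0, 1} : Finset ℕ), 1 := by simp
    _ ≤ ∑ i ∈ ({0, 1} : Finset ℕ), c i := by
        apply Finset.sum_le_sum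
        intro i hi
        simp only [Finset.mem_insert, Finset.mem_singleton] at hi
        rcases hi with rfl | rfl
        · exact hc 0 (Nat.zero_le n)
        · exact hc 1 hn
    _ ≤ ∑ i ∈ Finset.range (n + 1), c i :=
        Finset.sum_le_sum_of_subset_of_nonneg hsub (fun _ _ _ => Nat.zero_le _)
  have hfnu : ¬ IsUnit f := fun h => by have := E_of_isUnit h; omega
  constructor
  · intro hirr
    constructor
    · constructor
      · intro h0
        have := hcoeff 0 (Nat.zero_le n)
        rw [h0] at this
        simp at this
        exact absurd this.symm (ne_of_gt (hc 0 (Nat.zero_le n)))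
      · intro g h hgh
        rcases hirr.isUnit_or_isUnit hgh with hu | hu
        · obtain ⟨a, rfl⟩ := isUnit_iff_single.mp hu
          exact Or.inl ⟨1, a, Nat.one_pos, rfl⟩
        · obtain ⟨a, rfl⟩ := isUnit_iff_single.mp hu
          exact Or.inr ⟨1, a, Nat.one_pos, rfl⟩
    · set d := (Finset.range (n + 1)).gcd c with hd
      have hdvd : ∀ i, i ≤ n → d ∣ c i := fun i hi =>
        Finset.gcd_dvd (Finset.mem_range.mpr (Nat.lt_succ_of_le hi))
      have hdpos : 0 < d :=
        Nat.pos_of_dvd_of_pos (hdvd 0 (Nat.zero_le n)) (hc 0 (Nat.zero_le n))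
      have hfact : f = mono 0 d * ∑ i ∈ Finset.range (n + 1), mono (k i) (c i / d) := by
        rw [hf, Finset.mul_sum]
        apply Finset.sum_congr rfl
        intro i hi
        rw [mono, mono, mono, AddMonoidAlgebra.single_mul_single, zero_add,
          Nat.mul_div_cancel' (hdvd i (Nat.lt_succ_iff.mp (Finset.mem_range.mp hi)))]
      rcases hirr.isUnit_or_isUnit hfact with hu | hu
      · have := E_of_isUnit hu
        rw [E_mono] at this
        exact this
      · exfalso
        have hE : E (∑ i ∈ Finset.range (n + 1), mono (k i) (c i / d)) = 1 := E_of_isUnit hu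
        rw [map_sum] at hE
        have h01 : ∀ i, i ≤ n → 1 ≤ c i / d :=
          fun i hi => Nat.one_le_div_iff hdpos |>.mpr (Nat.le_of_dvd (hc i hi) (hdvd i hi))
        have hsub : ({0, 1} : Finset ℕ) ⊆ Finset.range (n + 1) := by
          intro x hx
          simp only [Finset.mem_insert, Finset.mem_singleton] at hx
          rcases hx with rfl | rfl <;> simp [Finset.mem_range] <;> omega
        have h2 : 2 ≤ ∑ i ∈ Finset.range (n + 1), E (mono (k i) (c i / d)) := by
          calc 2 = ∑ i ∈ ({0, 1} : Finset ℕ), 1 := by simp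
          _ ≤ ∑ i ∈ ({0, 1} : Finset ℕ), E (mono (k i) (c i / d)) := by
              apply Finset.sum_le_sum
              intro i hi
              simp only [Finset.mem_insert, Finset.mem_singleton] at hi
              rw [E_mono]
              rcases hi with rfl | rfl
              · exact h01 0 (Nat.zero_le n)
              · exact h01 1 hn
          _ ≤ _ := Finset.sum_le_sum_of_subset_of_nonneg hsub (fun _ _ _ => Nat.zero_le _)
        omega
  · rintro ⟨⟨hf0, hmono⟩, hgcd⟩
    refine ⟨hfnu, ?_⟩
    intro g h hgh
    -- a monomial factor divides all coefficients
    have key : ∀ (a : ℤ) (e : ℕ) (w : NL), 0 < e → f = mono a e * w → IsUnit (mono a e) := by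
      intro a e w _ hfw
      have hdvd : ∀ i, i ≤ n → e ∣ c i := by
        intro i hi
        have := hcoeff i hi
        rw [hfw, mono, AddMonoidAlgebra.coeff_single_mul_apply] at this
        exact ⟨w.coeff (-a + k i), this.symm⟩
      have : e ∣ (Finset.range (n + 1)).gcd c := by
        apply Finset.dvd_gcd
        intro i hi
        exact hdvd i (Nat.lt_succ_iff.mp (Finset.mem_range.mp hi))
      rw [hgcd, Nat.dvd_one] at this
      rw [this]
      exact isUnit_mono_one a
    rcases hmono g h hgh with ⟨e, a, he, rfl⟩ | ⟨e, a, he, rfl⟩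
    · exact Or.inl (key a e h he hgh)
    · right
      apply key a e g he
      rw [hgh, mul_comm]
end

section
/- Every hyper-monolithic Laurent polynomial f ∈ ℕ[x^{±1}] is monolithic. -/
open Finset
open scoped Pointwise

lemma mul_mem_support' {g h : NL} {a b : ℤ} (ha : a ∈ g.coeff.support) (hb : b ∈ h.coeff.support) :
    a + b ∈ (g * h).coeff.support := by
  rw [Finsupp.mem_support_iff] at ha hb ⊢
  have key : g.coeff a * h.coeff b ≤ (g * h).coeff (a + b) := by
    rw [AddMonoidAlgebra.coeff_mul]
    unfold Finsupp.sum
    refine le_trans ?_ (Finset.single_le_sum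
      (f := fun x => ∑ y ∈ h.coeff.support, if x + y = a + b then g.coeff x * h.coeff y else 0)
      (fun i _ => Nat.zero_le _) (Finsupp.mem_support_iff.mpr ha))
    refine le_trans ?_ (Finset.single_le_sum
      (f := fun y => if a + y = a + b then g.coeff a * h.coeff y else 0)
      (fun i _ => Nat.zero_le _) (Finsupp.mem_support_iff.mpr hb))
    simp
  have hpos : 0 < g.coeff a * h.coeff b := Nat.mul_pos (Nat.pos_of_ne_zero ha) (Nat.pos_of_ne_zero hb)
  omega

lemma support_mul_eq' (g h : NL) : (g * h).coeff.support = g.coeff.support + h.coeff.support := by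
  refine subset_antisymm (AddMonoidAlgebra.support_coeff_mul_subset g h) ?_
  intro t ht
  rw [Finset.mem_add] at ht
  obtain ⟨a, ha, b, hb, rfl⟩ := ht
  exact mul_mem_support' ha hb

lemma support_sum_mono' (n : ℕ) (k : ℕ → ℤ) (c : ℕ → ℕ)
    (hk : ∀ i j, i < j → j ≤ n → k j < k i) (hc : ∀ i, i ≤ n → 0 < c i) :
    (∑ i ∈ Finset.range (n + 1), mono (k i) (c i)).coeff.support =
      (Finset.range (n + 1)).image k := by
  have hinj : ∀ i ≤ n, ∀ j ≤ n, k i = k j → i = j := by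
    intro i hi j hj he
    rcases lt_trichotomy i j with h | h | h
    · exact absurd he (ne_of_gt (hk i j h hj))
    · exact h
    · exact absurd he (ne_of_gt (hk j i h hi)).symm
  have happly : ∀ t : ℤ, (∑ i ∈ Finset.range (n + 1), mono (k i) (c i)).coeff t =
      ∑ i ∈ Finset.range (n + 1), if k i = t then c i else 0 := by
    intro t
    rw [AddMonoidAlgebra.coeff_sum, Finsupp.finset_sum_apply]
    refine Finset.sum_congr rfl fun i _ => ?_
    simp only [mono, AddMonoidAlgebra.coeff_single]
    exact Finsupp.single_apply
  ext t
  rw [Finsupp.mem_support_iff, happly, Finset.mem_image]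
  constructor
  · intro hne
    by_contra hcon
    push_neg at hcon
    refine hne (Finset.sum_eq_zero fun i hi => ?_)
    rw [if_neg (hcon i hi)]
  · rintro ⟨m, hm, rfl⟩
    have : ∑ i ∈ Finset.range (n + 1), (if k i = k m then c i else 0) =
        ∑ i ∈ Finset.range (n + 1), (if i = m then c i else 0) := by
      refine Finset.sum_congr rfl fun i hi => ?_
      rw [Finset.mem_range, Nat.lt_succ_iff] at hi
      rw [Finset.mem_range, Nat.lt_succ_iff] at hm
      by_cases h : i = m
      · simp [h]
      · rw [if_neg h, if_neg (fun he => h (hinj i hi m hm he))]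
    rw [this, Finset.sum_ite_eq' (Finset.range (n + 1)) m c, if_pos hm]
    have := hc m (Nat.lt_succ_iff.mp (Finset.mem_range.mp hm))
    omega

lemma two_elts' {g : NL} (hg0 : g ≠ 0) (hg : ¬ IsMonomial g) :
    ∃ a ∈ g.coeff.support, ∃ a' ∈ g.coeff.support, a' < a := by
  have hne : g.coeff.support.Nonempty := Finsupp.support_nonempty_iff.2 (mt AddMonoidAlgebra.coeff_eq_zero.1 hg0)
  by_contra hcon
  push_neg at hcon
  apply hg
  set t := g.coeff.support.min' hne with ht
  have htm : t ∈ g.coeff.support := Finset.min'_mem _ _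
  have hsing : g.coeff.support = {t} := by
    refine Finset.eq_singleton_iff_unique_mem.2 ⟨htm, fun x hx => ?_⟩
    have h1 : t ≤ x := Finset.min'_le _ _ hx
    have h2 : x ≤ t := hcon x hx t htm
    omega
  obtain ⟨h1, h2⟩ := Finsupp.support_eq_singleton.1 hsing
  exact ⟨g.coeff t, t, Nat.pos_of_ne_zero h1, AddMonoidAlgebra.coeff_injective h2⟩

lemma core_aux' (n : ℕ) (k : ℕ → ℤ)
    (hk : ∀ i j, i < j → j ≤ n → k j < k i)
    (hgap : ∀ i, 1 ≤ i → i + 1 ≤ n → k 0 - k 1 < k i - k (i + 1))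
    (A B : Finset ℤ) {a0 a1 b0 b1 : ℤ}
    (ha0 : a0 ∈ A) (ha1 : a1 ∈ A) (hb0 : b0 ∈ B) (hb1 : b1 ∈ B)
    (ha01 : a1 < a0) (hb01 : b1 < b0)
    (ha0max : ∀ a ∈ A, a ≤ a0) (hb0max : ∀ b ∈ B, b ≤ b0)
    (ha1max : ∀ a ∈ A, a ≠ a0 → a ≤ a1) (hb1max : ∀ b ∈ B, b ≠ b0 → b ≤ b1)
    (hle : a0 - a1 ≤ b0 - b1)
    (hS : A + B = (Finset.range (n + 1)).image k) : False := by
  have hmem : ∀ a ∈ A, ∀ b ∈ B, ∃ m, m ≤ n ∧ a + b = k m := by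
    intro a ha b hb
    have : a + b ∈ A + B := Finset.add_mem_add ha hb
    rw [hS, Finset.mem_image] at this
    obtain ⟨m, hm, he⟩ := this
    exact ⟨m, Nat.lt_succ_iff.mp (Finset.mem_range.mp hm), he.symm⟩
  have hmemS : ∀ m, m ≤ n → ∃ a ∈ A, ∃ b ∈ B, a + b = k m := by
    intro m hm
    have : k m ∈ A + B := by
      rw [hS]
      exact Finset.mem_image_of_mem k (Finset.mem_range.mpr (Nat.lt_succ_of_le hm))
    exact Finset.mem_add.mp this
  have hkle0 : ∀ m, m ≤ n → k m ≤ k 0 := by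
    intro m hm
    rcases Nat.eq_zero_or_pos m with h | h
    · rw [h]
    · exact le_of_lt (hk 0 m h hm)
  have hk0 : a0 + b0 = k 0 := by
    obtain ⟨m, hm, he⟩ := hmem a0 ha0 b0 hb0
    obtain ⟨a, ha, b, hb, he0⟩ := hmemS 0 (Nat.zero_le n)
    have h1 : k 0 ≤ a0 + b0 := by
      rw [← he0]; exact add_le_add (ha0max a ha) (hb0max b hb)
    have h2 := hkle0 m hm
    omega
  have hn1 : 1 ≤ n := by
    obtain ⟨m, hm, he⟩ := hmem a1 ha1 b0 hb0
    have hm0 : m ≠ 0 := by rintro rfl; omega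
    omega
  have hkle1 : ∀ m, 1 ≤ m → m ≤ n → k m ≤ k 1 := by
    intro m h1 hm
    rcases Nat.eq_or_lt_of_le h1 with h | h
    · rw [← h]
    · exact le_of_lt (hk 1 m h hm)
  have step1 : k 0 - k 1 ≤ a0 - a1 := by
    obtain ⟨m, hm, he⟩ := hmem a1 ha1 b0 hb0
    have hm0 : m ≠ 0 := by rintro rfl; omega
    have := hkle1 m (Nat.one_le_iff_ne_zero.mpr hm0) hm
    omega
  have step2 : a0 - a1 ≤ k 0 - k 1 := by
    obtain ⟨a, ha, b, hb, he⟩ := hmemS 1 hn1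
    have hk01 : k 1 < k 0 := hk 0 1 Nat.one_pos hn1
    by_cases hab : a = a0
    · subst hab
      have hbne : b ≠ b0 := by rintro rfl; omega
      have := hb1max b hb hbne
      omega
    · have h1 := ha1max a ha hab
      have h2 := hb0max b hb
      omega
  obtain ⟨i, hi, hui⟩ := hmem a0 ha0 b1 hb1
  obtain ⟨j, hj, hvj⟩ := hmem a1 ha1 b1 hb1
  have hi0 : i ≠ 0 := by rintro rfl; omega
  have hij : i < j := by
    by_contra hcon
    push_neg at hcon
    have : k i ≤ k j := by
      rcases Nat.eq_or_lt_of_le hcon with h | h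
      · rw [h]
      · exact le_of_lt (hk j i h hi)
    omega
  have hj1 : k j ≤ k (i + 1) := by
    rcases Nat.eq_or_lt_of_le (Nat.succ_le_of_lt hij) with h | h
    · subst h; exact le_refl _
    · exact le_of_lt (hk (i + 1) j h hj)
  have hgapi := hgap i (Nat.one_le_iff_ne_zero.mpr hi0)
    (le_trans (Nat.succ_le_of_lt hij) hj)
  omega

lemma core' (n : ℕ) (k : ℕ → ℤ)
    (hk : ∀ i j, i < j → j ≤ n → k j < k i)
    (hgap : ∀ i, 1 ≤ i → i + 1 ≤ n → k 0 - k 1 < k i - k (i + 1))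
    (A B : Finset ℤ)
    (hA : ∃ a ∈ A, ∃ a' ∈ A, a' < a) (hB : ∃ b ∈ B, ∃ b' ∈ B, b' < b)
    (hS : A + B = (Finset.range (n + 1)).image k) : False := by
  obtain ⟨a, ha, a', ha', haa⟩ := hA
  obtain ⟨b, hb, b', hb', hbb⟩ := hB
  have hAne : A.Nonempty := ⟨a, ha⟩
  have hBne : B.Nonempty := ⟨b, hb⟩
  have hA'ne : (A.erase (A.max' hAne)).Nonempty := by
    refine ⟨a', Finset.mem_erase.mpr ⟨?_, ha'⟩⟩
    have := Finset.le_max' A a ha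
    omega
  have hB'ne : (B.erase (B.max' hBne)).Nonempty := by
    refine ⟨b', Finset.mem_erase.mpr ⟨?_, hb'⟩⟩
    have := Finset.le_max' B b hb
    omega
  set a0 := A.max' hAne
  set b0 := B.max' hBne
  set a1 := (A.erase a0).max' hA'ne with ha1def
  set b1 := (B.erase b0).max' hB'ne with hb1def
  have ha1E : a1 ∈ A.erase a0 := Finset.max'_mem _ _
  have hb1E : b1 ∈ B.erase b0 := Finset.max'_mem _ _
  have ha0m : a0 ∈ A := Finset.max'_mem _ _
  have hb0m : b0 ∈ B := Finset.max'_mem _ _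
  have ha1m : a1 ∈ A := Finset.mem_of_mem_erase ha1E
  have hb1m : b1 ∈ B := Finset.mem_of_mem_erase hb1E
  have ha01 : a1 < a0 :=
    lt_of_le_of_ne (Finset.le_max' A a1 ha1m) (Finset.ne_of_mem_erase ha1E)
  have hb01 : b1 < b0 :=
    lt_of_le_of_ne (Finset.le_max' B b1 hb1m) (Finset.ne_of_mem_erase hb1E)
  have ha0max : ∀ x ∈ A, x ≤ a0 := fun x hx => Finset.le_max' _ _ hx
  have hb0max : ∀ x ∈ B, x ≤ b0 := fun x hx => Finset.le_max' _ _ hx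
  have ha1max : ∀ x ∈ A, x ≠ a0 → x ≤ a1 := fun x hx hne =>
    Finset.le_max' _ _ (Finset.mem_erase.mpr ⟨hne, hx⟩)
  have hb1max : ∀ x ∈ B, x ≠ b0 → x ≤ b1 := fun x hx hne =>
    Finset.le_max' _ _ (Finset.mem_erase.mpr ⟨hne, hx⟩)
  rcases le_total (a0 - a1) (b0 - b1) with hle | hle
  · exact core_aux' n k hk hgap A B ha0m ha1m hb0m hb1m ha01 hb01
      ha0max hb0max ha1max hb1max hle hS
  · exact core_aux' n k hk hgap B A hb0m hb1m ha0m ha1m hb01 ha01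
      hb0max ha0max hb1max ha1max hle (by rw [add_comm]; exact hS)

/-- Every hyper-monolithic Laurent polynomial is monolithic. -/
theorem stmt4 (f : NL) (hf : HyperMonolithic f) : Monolithic f := by
  obtain ⟨n, k, c, hn, hk, hc, hfe, hcase⟩ := hf
  have hsupp : f.coeff.support = (Finset.range (n + 1)).image k := by
    rw [hfe]; exact support_sum_mono' n k c hk hc
  have hf0 : f ≠ 0 := by
    refine mt AddMonoidAlgebra.coeff_eq_zero.2 (Finsupp.support_nonempty_iff.1 ?_); rw [hsupp]
    exact ⟨k 0, Finset.mem_image_of_mem k (Finset.mem_range.mpr (Nat.succ_pos n))⟩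
  refine ⟨hf0, fun g h hgh => ?_⟩
  by_contra hcon
  push_neg at hcon
  obtain ⟨hgm, hhm⟩ := hcon
  have hg0 : g ≠ 0 := by rintro rfl; rw [zero_mul] at hgh; exact hf0 hgh
  have hh0 : h ≠ 0 := by rintro rfl; rw [mul_zero] at hgh; exact hf0 hgh
  have hA := two_elts' hg0 hgm
  have hB := two_elts' hh0 hhm
  have hSAB : g.coeff.support + h.coeff.support = (Finset.range (n + 1)).image k := by
    rw [← support_mul_eq', ← hgh, hsupp]
  rcases hcase with hgap | hgap2
  · exact core' n k hk hgap g.coeff.support h.coeff.support hA hB hSAB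
  · -- reduce to the first case by negating exponents
    set k' : ℕ → ℤ := fun i => -k (n - i) with hk'def
    have hk' : ∀ i j, i < j → j ≤ n → k' j < k' i := by
      intro i j hij hj
      simp only [hk'def, neg_lt_neg_iff]
      exact hk (n - j) (n - i) (by omega) (by omega)
    have hgap' : ∀ i, 1 ≤ i → i + 1 ≤ n → k' 0 - k' 1 < k' i - k' (i + 1) := by
      intro i h1 h2
      have h3 := hgap2 (n - (i + 1)) (by omega)
      have e : n - (i + 1) + 1 = n - i := by omega
      rw [e] at h3
      simp only [hk'def, Nat.sub_zero]
      omega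
    have hA' : ∃ a ∈ g.coeff.support.image Neg.neg, ∃ a' ∈ g.coeff.support.image Neg.neg, a' < a := by
      obtain ⟨x, hx, y, hy, hxy⟩ := hA
      exact ⟨-y, Finset.mem_image_of_mem _ hy, -x, Finset.mem_image_of_mem _ hx, by omega⟩
    have hB' : ∃ b ∈ h.coeff.support.image Neg.neg, ∃ b' ∈ h.coeff.support.image Neg.neg, b' < b := by
      obtain ⟨x, hx, y, hy, hxy⟩ := hB
      exact ⟨-y, Finset.mem_image_of_mem _ hy, -x, Finset.mem_image_of_mem _ hx, by omega⟩
    have hS' : g.coeff.support.image Neg.neg + h.coeff.support.image Neg.neg =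
        (Finset.range (n + 1)).image k' := by
      ext s
      simp only [Finset.mem_add, Finset.mem_image, Finset.mem_range]
      constructor
      · rintro ⟨x, ⟨a, ha, rfl⟩, y, ⟨b, hb, rfl⟩, rfl⟩
        have : a + b ∈ g.coeff.support + h.coeff.support := Finset.add_mem_add ha hb
        rw [hSAB, Finset.mem_image] at this
        obtain ⟨m, hm, he⟩ := this
        rw [Finset.mem_range, Nat.lt_succ_iff] at hm
        refine ⟨n - m, by omega, ?_⟩
        simp only [hk'def]
        rw [show n - (n - m) = m by omega]
        omega
      · rintro ⟨m, hm, rfl⟩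
        have : k (n - m) ∈ g.coeff.support + h.coeff.support := by
          rw [hSAB]
          exact Finset.mem_image_of_mem k (Finset.mem_range.mpr (by omega))
        obtain ⟨a, ha, b, hb, he⟩ := Finset.mem_add.mp this
        refine ⟨-a, ⟨a, ha, rfl⟩, -b, ⟨b, hb, rfl⟩, ?_⟩
        simp only [hk'def]
        omega
    exact core' n k' hk' hgap' _ _ hA' hB' hS'
end

section
/- Let f ∈ ℕ[x^{±1}] be hyper-monolithic with the smallest gap between consecutive exponents occurring at the last position (i.e., k_{n−1} − k_n < k_j − k_{j+1} for all j ∈ {0, …, n−2}). If f = gh where neither g nor h is a monomial, then a contradiction arises; hence no nontrivial factorization exists. -/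
/-- If the smallest gap of `f` occurs at the last position, then `f` admits no
factorization `f = g * h` in which neither factor is a monomial. -/
theorem stmt5 (n : ℕ) (hn : 1 ≤ n) (k : ℕ → ℤ) (c : ℕ → ℕ)
    (hk : ∀ i j, i < j → j ≤ n → k j < k i) (hc : ∀ i, i ≤ n → 0 < c i)
    (hgap : ∀ j, j + 2 ≤ n → k (n - 1) - k n < k j - k (j + 1))
    (f g h : NL) (hf : f = ∑ i ∈ Finset.range (n + 1), mono (k i) (c i))
    (hfactor : f = g * h) (hg : ¬ IsMonomial g) (hh : ¬ IsMonomial h) :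
    False := by
  classical
  -- basic pointwise description of f
  have hfapp : ∀ t, f.coeff t = ∑ i ∈ Finset.range (n + 1), if k i = t then c i else 0 := by
    intro t
    rw [hf]
    rw [AddMonoidAlgebra.coeff_sum, Finset.sum_apply']
    refine Finset.sum_congr rfl fun i _ => ?_
    exact Finsupp.single_apply
  have hle : ∀ i j, i ≤ j → j ≤ n → k j ≤ k i := by
    intro i j hij hj
    rcases eq_or_lt_of_le hij with rfl | hlt
    · exact le_rfl
    · exact (hk i j hlt hj).le
  have hfk : ∀ i, i ≤ n → f.coeff (k i) = c i := by
    intro i hi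
    rw [hfapp]
    rw [Finset.sum_eq_single i]
    · simp
    · intro j hj hji
      rw [if_neg]
      intro hkk
      rcases lt_or_gt_of_ne hji with hlt | hlt
      · exact absurd hkk (hk j i hlt hi).ne'
      · exact absurd hkk (hk i j hlt (Nat.lt_succ_iff.mp (Finset.mem_range.mp hj))).ne
    · intro hi'
      exact absurd (Finset.mem_range.mpr (by omega)) hi'
  have hmem : ∀ t, f.coeff t ≠ 0 → ∃ i, i ≤ n ∧ t = k i := by
    intro t ht
    by_contra hcon
    push_neg at hcon
    apply ht
    rw [hfapp]
    apply Finset.sum_eq_zero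
    intro i hi
    have hi' := Finset.mem_range.mp hi
    exact if_neg fun hh => (hcon i (by omega) hh.symm)
  have hd : k n < k (n - 1) := hk (n - 1) n (by omega) le_rfl
  -- the key gap lemma: any two support elements at distance `k (n-1) - k n`
  -- must be `k (n-1)` and `k n`.
  have L : ∀ x y : ℤ, f.coeff x ≠ 0 → f.coeff y ≠ 0 → x - y = k (n - 1) - k n → y = k n := by
    intro x y hx hy hxy
    obtain ⟨j, hj, rfl⟩ := hmem x hx
    obtain ⟨i, hi, rfl⟩ := hmem y hy
    have hki : k i < k j := by omega
    have hji : j < i := by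
      by_contra hcon
      push_neg at hcon
      exact absurd (hle i j hcon hj) (by omega)
    have hieq : i = j + 1 := by
      by_contra hne
      have h2 : j + 2 ≤ i := by omega
      have g1 : k (n - 1) - k n < k j - k (j + 1) := hgap j (by omega)
      have g2 : k i ≤ k (j + 1) := hle (j + 1) i (by omega) hi
      omega
    subst hieq
    have hjn : ¬ (j + 2 ≤ n) := by
      intro hh
      have := hgap j hh
      omega
    have : j + 1 = n := by omega
    rw [this]
  -- f ≠ 0 and g, h ≠ 0
  have hf0 : f.coeff (k 0) ≠ 0 := by
    rw [hfk 0 (by omega)]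
    exact (hc 0 (by omega)).ne'
  have hg0 : g ≠ 0 := by
    rintro rfl
    rw [zero_mul] at hfactor
    exact hf0 (by rw [hfactor]; rfl)
  have hh0 : h ≠ 0 := by
    rintro rfl
    rw [mul_zero] at hfactor
    exact hf0 (by rw [hfactor]; rfl)
  -- supports of g and h each have at least two elements
  have two_le : ∀ p : NL, p ≠ 0 → ¬ IsMonomial p → 2 ≤ p.coeff.support.card := by
    intro p hp0 hpm
    by_contra hcon
    push_neg at hcon
    have hcard : p.coeff.support.card = 0 ∨ p.coeff.support.card = 1 := by omega
    rcases hcard with hcard | hcard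
    · exact hp0 (AddMonoidAlgebra.coeff_eq_zero.mp (Finsupp.support_eq_empty.mp (Finset.card_eq_zero.mp hcard)))
    · obtain ⟨a, b, hb, hp⟩ := Finsupp.card_support_eq_one'.mp hcard
      exact hpm ⟨b, a, Nat.pos_of_ne_zero hb, AddMonoidAlgebra.coeff_injective hp⟩
  have hgc := two_le g hg0 hg
  have hhc := two_le h hh0 hh
  set A := g.coeff.support with hA
  set B := h.coeff.support with hB
  have hAne : A.Nonempty := Finset.card_pos.mp (by omega)
  have hBne : B.Nonempty := Finset.card_pos.mp (by omega)
  set a0 := A.min' hAne with ha0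
  set b0 := B.min' hBne with hb0
  have hA'ne : (A.erase a0).Nonempty := by
    rw [← Finset.card_pos, Finset.card_erase_of_mem (A.min'_mem hAne)]
    omega
  have hB'ne : (B.erase b0).Nonempty := by
    rw [← Finset.card_pos, Finset.card_erase_of_mem (B.min'_mem hBne)]
    omega
  set a1 := (A.erase a0).min' hA'ne with ha1
  set b1 := (B.erase b0).min' hB'ne with hb1
  have ha1A : a1 ∈ A := Finset.mem_of_mem_erase ((A.erase a0).min'_mem hA'ne)
  have hb1B : b1 ∈ B := Finset.mem_of_mem_erase ((B.erase b0).min'_mem hB'ne)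
  have ha01 : a0 < a1 :=
    lt_of_le_of_ne (A.min'_le a1 ha1A)
      (Finset.ne_of_mem_erase ((A.erase a0).min'_mem hA'ne)).symm
  have hb01 : b0 < b1 :=
    lt_of_le_of_ne (B.min'_le b1 hb1B)
      (Finset.ne_of_mem_erase ((B.erase b0).min'_mem hB'ne)).symm
  have ha_low : ∀ a ∈ A, a ≠ a0 → a1 ≤ a := fun a haA hne =>
    (A.erase a0).min'_le a (Finset.mem_erase.mpr ⟨hne, haA⟩)
  have hb_low : ∀ b ∈ B, b ≠ b0 → b1 ≤ b := fun b hbB hne =>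
    (B.erase b0).min'_le b (Finset.mem_erase.mpr ⟨hne, hbB⟩)
  -- coefficient lower bound for products
  have hmul_lb : ∀ a b : ℤ, g.coeff a * h.coeff b ≤ (g * h).coeff (a + b) := by
    intro a b
    by_cases hga : g.coeff a = 0
    · simp [hga]
    by_cases hhb : h.coeff b = 0
    · simp [hhb]
    rw [AddMonoidAlgebra.coeff_mul]
    have ha' : a ∈ g.coeff.support := Finsupp.mem_support_iff.mpr hga
    have hb' : b ∈ h.coeff.support := Finsupp.mem_support_iff.mpr hhb
    calc g.coeff a * h.coeff b = if a + b = a + b then g.coeff a * h.coeff b else 0 := by simp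
      _ ≤ ∑ b' ∈ h.coeff.support, if a + b' = a + b then g.coeff a * h.coeff b' else 0 :=
          Finset.single_le_sum (f := fun b' => if a + b' = a + b then g.coeff a * h.coeff b' else 0)
            (fun _ _ => Nat.zero_le _) hb'
      _ ≤ ∑ a' ∈ g.coeff.support, ∑ b' ∈ h.coeff.support,
            if a' + b' = a + b then g.coeff a' * h.coeff b' else 0 :=
          Finset.single_le_sum
            (f := fun a' => ∑ b' ∈ h.coeff.support, if a' + b' = a + b then g.coeff a' * h.coeff b' else 0)
            (fun _ _ => Nat.zero_le _) ha'
      _ = g.coeff.sum fun a' ga => h.coeff.sum fun b' hb => if a' + b' = a + b then ga * hb else 0 := rfl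
  -- membership in support of f from supports of g and h
  have hABf : ∀ a ∈ A, ∀ b ∈ B, f.coeff (a + b) ≠ 0 := by
    intro a haA b hbB
    have h1 : 0 < g.coeff a * h.coeff b :=
      Nat.mul_pos (Nat.pos_of_ne_zero (Finsupp.mem_support_iff.mp haA))
        (Nat.pos_of_ne_zero (Finsupp.mem_support_iff.mp hbB))
    have h2 := hmul_lb a b
    rw [← hfactor] at h2
    omega
  -- every support element of f decomposes
  have hdecomp : ∀ t, f.coeff t ≠ 0 → ∃ a ∈ A, ∃ b ∈ B, a + b = t := by
    intro t ht
    have htf : t ∈ (g * h).coeff.support := by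
      rw [← hfactor]
      exact Finsupp.mem_support_iff.mpr ht
    have := AddMonoidAlgebra.support_coeff_mul_subset g h htf
    rwa [Finset.mem_add] at this
  -- a0 + b0 = k n
  have hkn : f.coeff (k n) ≠ 0 := by rw [hfk n le_rfl]; exact (hc n le_rfl).ne'
  have hminf : ∀ t, f.coeff t ≠ 0 → k n ≤ t := by
    intro t ht
    obtain ⟨i, hi, rfl⟩ := hmem t ht
    exact hle i n hi le_rfl
  have h00 : a0 + b0 = k n := by
    obtain ⟨a, haA, b, hbB, hab⟩ := hdecomp (k n) hkn
    have h1 : a0 + b0 ≤ k n := by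
      have := A.min'_le a haA
      have := B.min'_le b hbB
      omega
    have h2 := hminf (a0 + b0) (hABf a0 (A.min'_mem hAne) b0 (B.min'_mem hBne))
    omega
  -- a1 + b0 and a0 + b1 are ≥ k (n-1)
  have hsecond : ∀ t, f.coeff t ≠ 0 → t ≠ k n → k (n - 1) ≤ t := by
    intro t ht htn
    obtain ⟨i, hi, rfl⟩ := hmem t ht
    have hi' : i ≤ n - 1 := by
      by_contra hcon
      have hin : i = n := by omega
      exact htn (by rw [hin])
    exact hle i (n - 1) hi' (by omega)
  have h10f : f.coeff (a1 + b0) ≠ 0 := hABf a1 ha1A b0 (B.min'_mem hBne)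
  have h01f : f.coeff (a0 + b1) ≠ 0 := hABf a0 (A.min'_mem hAne) b1 hb1B
  have h10 : k (n - 1) ≤ a1 + b0 := hsecond _ h10f (by omega)
  have h01 : k (n - 1) ≤ a0 + b1 := hsecond _ h01f (by omega)
  -- k (n-1) is attained by one of them
  have hkn1 : f.coeff (k (n - 1)) ≠ 0 := by
    rw [hfk (n - 1) (by omega)]; exact (hc (n - 1) (by omega)).ne'
  obtain ⟨a, haA, b, hbB, hab⟩ := hdecomp (k (n - 1)) hkn1
  have h11f : f.coeff (a1 + b1) ≠ 0 := hABf a1 ha1A b1 hb1B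
  by_cases hcase : a = a0
  · -- then b ≠ b0, so k (n-1) ≥ a0 + b1, hence a0 + b1 = k (n-1)
    have hbne : b ≠ b0 := by
      intro hb; rw [hcase, hb] at hab; omega
    have : a0 + b1 ≤ k (n - 1) := by
      have := hb_low b hbB hbne
      omega
    have heq : a0 + b1 = k (n - 1) := by omega
    -- apply L with x = a1 + b1, y = a1 + b0
    have := L (a1 + b1) (a1 + b0) h11f h10f (by omega)
    omega
  · -- a ≠ a0, so k (n-1) ≥ a1 + b0, hence a1 + b0 = k (n-1)
    have : a1 + b0 ≤ k (n - 1) := by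
      have h1 := ha_low a haA hcase
      have h2 := B.min'_le b hbB
      omega
    have heq : a1 + b0 = k (n - 1) := by omega
    -- apply L with x = a1 + b1, y = a0 + b1
    have := L (a1 + b1) (a0 + b1) h11f h01f (by omega)
    omega
end

section
/- Let Δ_0, …, Δ_n be a finite sequence of positive integers with n ≥ 1. Then there exist indices α, β ∈ {0, …, n} such that: (1) α < β; (2) Δ_j > max(Δ_α, Δ_β) for every j ∈ {0, …, α−1} ∪ {β+1, …, n}; and (3) there is at most one index t ∈ {α, …, β} with Δ_t < max(Δ_α, Δ_β). -/
/-- The splitting-configuration lemma for finite sequences of positive integers. -/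
theorem stmt6 (n : ℕ) (hn : 1 ≤ n) (Δ : ℕ → ℕ) (hΔ : ∀ i, i ≤ n → 0 < Δ i) :
    ∃ α β : ℕ, α ≤ n ∧ β ≤ n ∧ α < β ∧
      (∀ j, j ≤ n → (j < α ∨ β < j) → max (Δ α) (Δ β) < Δ j) ∧
      (∀ t₁ t₂, α ≤ t₁ → t₁ ≤ β → α ≤ t₂ → t₂ ≤ β →
        Δ t₁ < max (Δ α) (Δ β) → Δ t₂ < max (Δ α) (Δ β) → t₁ = t₂) := by
  classical
  have hmem : ∀ i, i ∈ Finset.range (n+1) ↔ i ≤ n := by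
    intro i; simp [Finset.mem_range, Nat.lt_succ_iff]
  obtain ⟨p, hp, hpmin⟩ := Finset.exists_min_image (Finset.range (n+1)) Δ ⟨0, by simp⟩
  have hs' : ((Finset.range (n+1)).erase p).Nonempty := by
    rw [← Finset.card_pos, Finset.card_erase_of_mem hp, Finset.card_range]
    omega
  obtain ⟨q, hq, hqmin⟩ := Finset.exists_min_image _ Δ hs'
  obtain ⟨hqp, hqs⟩ := Finset.mem_erase.mp hq
  set m₂ := Δ q with hm₂
  set A := (Finset.range (n+1)).filter (fun i => Δ i ≤ m₂) with hA
  have hpA : p ∈ A := Finset.mem_filter.mpr ⟨hp, hpmin q hqs⟩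
  have hqA : q ∈ A := Finset.mem_filter.mpr ⟨hqs, le_refl _⟩
  have hAne : A.Nonempty := ⟨p, hpA⟩
  set α := A.min' hAne with hαdef
  set β := A.max' hAne with hβdef
  have hαA : α ∈ A := A.min'_mem hAne
  have hβA : β ∈ A := A.max'_mem hAne
  have hαn : α ≤ n := (hmem α).mp (Finset.mem_filter.mp hαA).1
  have hβn : β ≤ n := (hmem β).mp (Finset.mem_filter.mp hβA).1
  have hαp := A.min'_le p hpA
  have hαq := A.min'_le q hqA
  have hβp := A.le_max' p hpA
  have hβq := A.le_max' q hqA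
  have hαβ : α < β := by omega
  have hkey : ∀ t, t ≤ n → Δ t < m₂ → t = p := by
    intro t ht hlt
    by_contra htp
    have ht' : t ∈ (Finset.range (n+1)).erase p :=
      Finset.mem_erase.mpr ⟨htp, (hmem t).mpr ht⟩
    exact absurd (hqmin t ht') (not_le.mpr hlt)
  have hαle : Δ α ≤ m₂ := (Finset.mem_filter.mp hαA).2
  have hβle : Δ β ≤ m₂ := (Finset.mem_filter.mp hβA).2
  have hmax : max (Δ α) (Δ β) = m₂ := by
    refine le_antisymm (max_le hαle hβle) ?_
    by_contra h
    push_neg at h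
    have h1 : Δ α < m₂ := lt_of_le_of_lt (le_max_left _ _) h
    have h2 : Δ β < m₂ := lt_of_le_of_lt (le_max_right _ _) h
    have e1 := hkey α hαn h1
    have e2 := hkey β hβn h2
    omega
  refine ⟨α, β, hαn, hβn, hαβ, ?_, ?_⟩
  · intro j hj hjout
    have hjA : j ∉ A := by
      intro hjA
      have h1 := A.min'_le j hjA
      have h2 := A.le_max' j hjA
      omega
    have : ¬ Δ j ≤ m₂ := fun hle => hjA (Finset.mem_filter.mpr ⟨(hmem j).mpr hj, hle⟩)
    rw [hmax]
    omega
  · intro t₁ t₂ h1 h2 h3 h4 h5 h6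
    rw [hmax] at h5 h6
    have e1 := hkey t₁ (le_trans h2 hβn) h5
    have e2 := hkey t₂ (le_trans h4 hβn) h6
    omega
end

section
/- Let f ∈ ℕ[x^{±1}] with |supp(f)| ≥ 3. Then f can be written as f = g + h where g, h ∈ ℕ[x^{±1}], g is hyper-monolithic, and h(1) ≤ g(1). -/
-- Auxiliary machinery
noncomputable def stmt7EnumN (T : Finset ℕ) : ℕ → ℕ :=
  fun j => if h : j < T.card then ((T.orderIsoOfFin rfl) ⟨j, h⟩ : ℕ) else 0

lemma stmt7EnumN_mem (T : Finset ℕ) {j : ℕ} (h : j < T.card) : stmt7EnumN T j ∈ T := by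
  simp only [stmt7EnumN, dif_pos h]
  exact ((T.orderIsoOfFin rfl) ⟨j, h⟩).2

lemma stmt7EnumN_lt (T : Finset ℕ) {i j : ℕ} (hij : i < j) (h : j < T.card) :
    stmt7EnumN T i < stmt7EnumN T j := by
  have hi : i < T.card := lt_trans hij h
  simp only [stmt7EnumN, dif_pos h, dif_pos hi]
  exact Subtype.coe_lt_coe.mpr ((T.orderIsoOfFin rfl).lt_iff_lt.mpr hij)

lemma stmt7EnumN_surj (T : Finset ℕ) {x : ℕ} (hx : x ∈ T) :
    ∃ j, ∃ _ : j < T.card, stmt7EnumN T j = x := by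
  refine ⟨((T.orderIsoOfFin rfl).symm ⟨x, hx⟩ : Fin T.card), Fin.is_lt _, ?_⟩
  simp only [stmt7EnumN, dif_pos (Fin.is_lt _)]
  rw [Fin.eta]
  rw [OrderIso.apply_symm_apply]

lemma sum_stmt7EnumN {M : Type*} [AddCommMonoid M] (T : Finset ℕ) (F : ℕ → M) :
    ∑ i ∈ T, F i = ∑ j ∈ Finset.range T.card, F (stmt7EnumN T j) := by
  rw [← Fin.sum_univ_eq_sum_range (fun j => F (stmt7EnumN T j)) T.card]
  rw [← Finset.sum_coe_sort T F]
  rw [← Equiv.sum_comp (T.orderIsoOfFin rfl).toEquiv (fun x : T => F (x : ℕ))]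
  apply Finset.sum_congr rfl
  intro j _
  simp [stmt7EnumN, j.2]

lemma stmt7_hm_first (N : ℕ) (k : ℕ → ℤ) (c : ℕ → ℕ) (T : Finset ℕ)
    (hTsub : T ⊆ Finset.range (N+1))
    (hk : ∀ i j : ℕ, i < j → j ≤ N → k j < k i)
    (hc : ∀ i ∈ T, 0 < c i)
    (a : ℕ) (ha : a ∈ T) (ha1 : a + 1 ∈ T) (hmin : ∀ i ∈ T, a ≤ i)
    (hgap : ∀ u v, u ∈ T → v ∈ T → a < u → u < v → k a - k (a+1) < k u - k v) :
    HyperMonolithic (∑ i ∈ T, mono (k i) (c i)) := by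
  have hcard : 2 ≤ T.card := Finset.one_lt_card.mpr ⟨a, ha, a+1, ha1, by omega⟩
  set n := T.card - 1 with hn
  have hcardn : T.card = n + 1 := by omega
  have hboundN : ∀ j, j < T.card → stmt7EnumN T j ≤ N := by
    intro j hj
    have := hTsub (stmt7EnumN_mem T hj)
    simp only [Finset.mem_range] at this; omega
  have he0 : stmt7EnumN T 0 = a := by
    have h0c : 0 < T.card := by omega
    have h1 : a ≤ stmt7EnumN T 0 := hmin _ (stmt7EnumN_mem T h0c)
    obtain ⟨j, hj, hje⟩ := stmt7EnumN_surj T ha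
    have h2 : stmt7EnumN T 0 ≤ a := by
      rcases Nat.eq_zero_or_pos j with rfl | hjp
      · omega
      · have := stmt7EnumN_lt T hjp hj; omega
    omega
  have he1 : stmt7EnumN T 1 = a + 1 := by
    have h1c : 1 < T.card := by omega
    have hgt : stmt7EnumN T 0 < stmt7EnumN T 1 := stmt7EnumN_lt T zero_lt_one h1c
    obtain ⟨j, hj, hje⟩ := stmt7EnumN_surj T ha1
    have hj1 : 1 ≤ j := by
      rcases Nat.eq_zero_or_pos j with rfl | h
      · omega
      · omega
    have h2 : stmt7EnumN T 1 ≤ stmt7EnumN T j := by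
      rcases Nat.lt_or_ge 1 j with h | h
      · exact le_of_lt (stmt7EnumN_lt T h hj)
      · have : j = 1 := by omega
        subst this; exact le_refl _
    omega
  refine ⟨n, fun j => k (stmt7EnumN T j), fun j => c (stmt7EnumN T j), by omega, ?_, ?_, ?_, Or.inl ?_⟩
  · intro i j hij hjn
    exact hk _ _ (stmt7EnumN_lt T hij (by omega)) (hboundN j (by omega))
  · intro i hin
    exact hc _ (stmt7EnumN_mem T (by omega))
  · rw [sum_stmt7EnumN T (fun i => mono (k i) (c i)), hcardn]
  · intro i h1i hi1n
    have hu := stmt7EnumN_mem T (show i < T.card by omega)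
    have hv := stmt7EnumN_mem T (show i+1 < T.card by omega)
    have hau : a < stmt7EnumN T i := by
      have := stmt7EnumN_lt T (show 0 < i by omega) (show i < T.card by omega)
      omega
    have huv : stmt7EnumN T i < stmt7EnumN T (i+1) := stmt7EnumN_lt T (by omega) (by omega)
    have := hgap _ _ hu hv hau huv
    simpa [he0, he1] using this

lemma stmt7_hm_last (N : ℕ) (k : ℕ → ℤ) (c : ℕ → ℕ) (T : Finset ℕ)
    (hTsub : T ⊆ Finset.range (N+1))
    (hk : ∀ i j : ℕ, i < j → j ≤ N → k j < k i)
    (hc : ∀ i ∈ T, 0 < c i)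
    (b : ℕ) (hb1pos : 1 ≤ b) (hb : b ∈ T) (hb1 : b - 1 ∈ T) (hmax : ∀ i ∈ T, i ≤ b)
    (hgap : ∀ u v, u ∈ T → v ∈ T → u < v → v < b → k (b-1) - k b < k u - k v) :
    HyperMonolithic (∑ i ∈ T, mono (k i) (c i)) := by
  have hcard : 2 ≤ T.card := Finset.one_lt_card.mpr ⟨b, hb, b-1, hb1, by omega⟩
  set n := T.card - 1 with hn
  have hcardn : T.card = n + 1 := by omega
  have hboundN : ∀ j, j < T.card → stmt7EnumN T j ≤ N := by
    intro j hj
    have := hTsub (stmt7EnumN_mem T hj)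
    simp only [Finset.mem_range] at this; omega
  have hen : stmt7EnumN T n = b := by
    have hnc : n < T.card := by omega
    have h1 : stmt7EnumN T n ≤ b := hmax _ (stmt7EnumN_mem T hnc)
    obtain ⟨j, hj, hje⟩ := stmt7EnumN_surj T hb
    have h2 : b ≤ stmt7EnumN T n := by
      rcases Nat.lt_or_ge j n with h | h
      · have := stmt7EnumN_lt T h hnc; omega
      · have : j = n := by omega
        subst this; omega
    omega
  have hen1 : stmt7EnumN T (n-1) = b - 1 := by
    have hn1c : n - 1 < T.card := by omega
    have hlt : stmt7EnumN T (n-1) < stmt7EnumN T n := stmt7EnumN_lt T (by omega) (by omega)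
    obtain ⟨j, hj, hje⟩ := stmt7EnumN_surj T hb1
    have hjn : j ≠ n := by
      intro h; subst h; omega
    have h2 : stmt7EnumN T j ≤ stmt7EnumN T (n-1) := by
      rcases Nat.lt_or_ge j (n-1) with h | h
      · exact le_of_lt (stmt7EnumN_lt T h hn1c)
      · have : j = n - 1 := by omega
        subst this; exact le_refl _
    omega
  refine ⟨n, fun j => k (stmt7EnumN T j), fun j => c (stmt7EnumN T j), by omega, ?_, ?_, ?_, Or.inr ?_⟩
  · intro i j hij hjn
    exact hk _ _ (stmt7EnumN_lt T hij (by omega)) (hboundN j (by omega))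
  · intro i hin
    exact hc _ (stmt7EnumN_mem T (by omega))
  · rw [sum_stmt7EnumN T (fun i => mono (k i) (c i)), hcardn]
  · intro j hj2
    have hu := stmt7EnumN_mem T (show j < T.card by omega)
    have hv := stmt7EnumN_mem T (show j+1 < T.card by omega)
    have huv : stmt7EnumN T j < stmt7EnumN T (j+1) := stmt7EnumN_lt T (by omega) (by omega)
    have hvb : stmt7EnumN T (j+1) < b := by
      have := stmt7EnumN_lt T (show j+1 < n by omega) (show n < T.card by omega)
      omega
    have := hgap _ _ hu hv huv hvb
    simpa [hen, hen1] using this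

noncomputable def stmt7EnumZ (T : Finset ℤ) : ℕ → ℤ :=
  fun j => if h : j < T.card then ((T.orderIsoOfFin rfl) ⟨j, h⟩ : ℤ) else 0

lemma stmt7EnumZ_mem (T : Finset ℤ) {j : ℕ} (h : j < T.card) : stmt7EnumZ T j ∈ T := by
  simp only [stmt7EnumZ, dif_pos h]
  exact ((T.orderIsoOfFin rfl) ⟨j, h⟩).2

lemma stmt7EnumZ_lt (T : Finset ℤ) {i j : ℕ} (hij : i < j) (h : j < T.card) :
    stmt7EnumZ T i < stmt7EnumZ T j := by
  have hi : i < T.card := lt_trans hij h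
  simp only [stmt7EnumZ, dif_pos h, dif_pos hi]
  exact Subtype.coe_lt_coe.mpr ((T.orderIsoOfFin rfl).lt_iff_lt.mpr hij)

lemma sum_stmt7EnumZ {M : Type*} [AddCommMonoid M] (T : Finset ℤ) (F : ℤ → M) :
    ∑ i ∈ T, F i = ∑ j ∈ Finset.range T.card, F (stmt7EnumZ T j) := by
  rw [← Fin.sum_univ_eq_sum_range (fun j => F (stmt7EnumZ T j)) T.card]
  rw [← Finset.sum_coe_sort T F]
  rw [← Equiv.sum_comp (T.orderIsoOfFin rfl).toEquiv (fun x : T => F (x : ℤ))]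
  apply Finset.sum_congr rfl
  intro j _
  simp [stmt7EnumZ, j.2]

lemma stmt7_setup (f : NL) (hsupp : 3 ≤ f.coeff.support.card) :
    ∃ (N : ℕ) (k : ℕ → ℤ), 2 ≤ N ∧
      (∀ i j, i < j → j ≤ N → k j < k i) ∧ (∀ i, i ≤ N → k i ∈ f.coeff.support) ∧
      f = ∑ i ∈ Finset.range (N+1), mono (k i) (f.coeff (k i)) := by
  classical
  set M := f.coeff.support.card with hMdef
  have hM : 3 ≤ M := hsupp
  set k : ℕ → ℤ := fun i => stmt7EnumZ f.coeff.support (M - 1 - i) with hkdef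
  have hk : ∀ i j : ℕ, i < j → j ≤ M - 1 → k j < k i := by
    intro i j hij hj
    exact stmt7EnumZ_lt f.coeff.support (by omega) (by omega)
  have hmem : ∀ i, i ≤ M - 1 → k i ∈ f.coeff.support := by
    intro i _
    exact stmt7EnumZ_mem f.coeff.support (by omega)
  refine ⟨M - 1, k, by omega, hk, hmem, ?_⟩
  rw [← AddMonoidAlgebra.coeff_inj, AddMonoidAlgebra.coeff_sum]
  conv_lhs => rw [← Finsupp.sum_single f.coeff]
  rw [Finsupp.sum]
  rw [show (M - 1) + 1 = M by omega]
  rw [sum_stmt7EnumZ f.coeff.support (fun x => Finsupp.single x (f.coeff x))]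
  rw [← Finset.sum_range_reflect (fun j => Finsupp.single (stmt7EnumZ f.coeff.support j) (f.coeff (stmt7EnumZ f.coeff.support j))) M]
  apply Finset.sum_congr rfl
  intro i hi
  rfl

lemma stmt7_evalOne_add (a b : NL) : evalOne (a + b) = evalOne a + evalOne b := by
  unfold evalOne; rw [AddMonoidAlgebra.coeff_add]; exact Finsupp.sum_add_index' (fun _ => rfl) (fun _ _ _ => rfl)

lemma stmt7_evalOne_mono (k : ℤ) (c : ℕ) : evalOne (mono k c) = c := by
  unfold evalOne mono AddMonoidAlgebra.single
  exact Finsupp.sum_single_index rfl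

lemma stmt7_evalOne_sum (U : Finset ℕ) (k : ℕ → ℤ) (c : ℕ → ℕ) :
    evalOne (∑ i ∈ U, mono (k i) (c i)) = ∑ i ∈ U, c i := by
  induction U using Finset.induction with
  | empty => simp [evalOne]
  | insert _ _ h ih =>
      rw [Finset.sum_insert h, stmt7_evalOne_add, stmt7_evalOne_mono, ih, Finset.sum_insert h]


lemma stmt7_step_le (N : ℕ) (k : ℕ → ℤ) (d : ℤ)
    (hd_le : ∀ i, 1 ≤ i → i ≤ N → d ≤ k (i-1) - k i) (hdpos : 0 < d) :
    ∀ v, v ≤ N → ∀ u, u < v → d ≤ k u - k v := by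
  intro v
  induction v with
  | zero => intro _ u hu; exact absurd hu (Nat.not_lt_zero u)
  | succ w ih =>
      intro hv u hu
      have hw : d ≤ k w - k (w+1) := by
        have := hd_le (w+1) (by omega) hv
        simpa using this
      rcases Nat.lt_or_ge u w with h | h
      · have h1 : d ≤ k u - k w := ih (by omega) u h
        linarith
      · have : u = w := by omega
        subst this; exact hw

lemma stmt7_skip_lt (N : ℕ) (k : ℕ → ℤ) (d : ℤ)
    (hd_le : ∀ i, 1 ≤ i → i ≤ N → d ≤ k (i-1) - k i) (hdpos : 0 < d) :
    ∀ u v, u + 2 ≤ v → v ≤ N → d < k u - k v := by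
  intro u v h2 hv
  have ha : d ≤ k u - k (u+1) := by
    have := hd_le (u+1) (by omega) (by omega)
    simpa using this
  have hb : d ≤ k (u+1) - k v := stmt7_step_le N k d hd_le hdpos v hv (u+1) (by omega)
  linarith

lemma stmt7_pair_core (N : ℕ) (k : ℕ → ℤ) (d : ℤ)
    (hd_le : ∀ i, 1 ≤ i → i ≤ N → d ≤ k (i-1) - k i) (hdpos : 0 < d)
    (hk : ∀ i j : ℕ, i < j → j ≤ N → k j < k i)
    (F : Finset ℕ) (af b e : ℕ)
    (hafF : af ∈ F) (hbF : b ∈ F)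
    (haf_min : ∀ y ∈ F, af ≤ y) (hb_top : ∀ y ∈ F, y ≤ b)
    (hodd : F.card % 2 = 1)
    (haf1 : 1 ≤ af) (hafN : af ≤ N) (hbN : b ≤ N)
    (hafgap : k (af-1) - k af = d) (hbgap : k (b-1) - k b = d)
    (hEF : ∀ v, 1 ≤ v → v ≤ N → k (v-1) - k v = d → v ∉ F → v = e + 1 ∧ e = b)
    (he_af : e ≠ af)
    (he_cov : (F.filter (fun x => x ≤ e)).card % 2 = 0 ∨ e = b) :
    ∃ T₁ T₂ : Finset ℕ, T₁ ⊆ Finset.range (N+1) ∧ T₂ ⊆ Finset.range (N+1) ∧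
      Finset.range (N+1) ⊆ T₁ ∪ T₂ ∧
      (∀ c : ℕ → ℕ, (∀ i ∈ T₁, 0 < c i) → HyperMonolithic (∑ i ∈ T₁, mono (k i) (c i))) ∧
      (∀ c : ℕ → ℕ, (∀ i ∈ T₂, 0 < c i) → HyperMonolithic (∑ i ∈ T₂, mono (k i) (c i))) := by
  classical
  set σ : ℕ → ℕ := fun i => (F.filter (fun x => x ≤ i)).card with hσdef
  have hb1 : 1 ≤ b := le_trans haf1 (hb_top af hafF)
  have hσ_low : ∀ i, σ i % 2 = 1 → af ≤ i := by
    intro i hi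
    by_contra h
    push_neg at h
    have hemp : F.filter (fun x => x ≤ i) = ∅ :=
      Finset.filter_eq_empty_iff.mpr (fun {x} hx hxi => by have := haf_min x hx; omega)
    simp only [hσdef, hemp, Finset.card_empty] at hi
    omega
  have hσ_top : ∀ i, b ≤ i → σ i = F.card := by
    intro i hi
    have : F.filter (fun x => x ≤ i) = F :=
      Finset.filter_eq_self.mpr (fun y hy => le_trans (hb_top y hy) hi)
    simp only [hσdef, this]
  have hσ_af : σ af = 1 := by
    have : F.filter (fun x => x ≤ af) = {af} := by
      ext y
      simp only [Finset.mem_filter, Finset.mem_singleton]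
      constructor
      · rintro ⟨h1, h2⟩; exact le_antisymm h2 (haf_min y h1)
      · rintro rfl; exact ⟨hafF, le_refl _⟩
    simp only [hσdef, this, Finset.card_singleton]
  have hσ_bm1 : σ (b-1) = F.card - 1 := by
    have : F.filter (fun x => x ≤ b - 1) = F.erase b := by
      ext y
      simp only [Finset.mem_filter, Finset.mem_erase]
      constructor
      · rintro ⟨h1, h2⟩; exact ⟨by omega, h1⟩
      · rintro ⟨h1, h2⟩
        refine ⟨h2, ?_⟩
        have := hb_top y h2; omega
    simp only [hσdef, this, Finset.card_erase_of_mem hbF]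
  have hFpos : 1 ≤ F.card := Finset.card_pos.mpr ⟨af, hafF⟩
  have hadj : ∀ u, σ u % 2 = σ (u+1) % 2 → u + 1 ∉ F := by
    intro u hpar hmem
    have heq : F.filter (fun x => x ≤ u+1) = insert (u+1) (F.filter (fun x => x ≤ u)) := by
      ext x
      simp only [Finset.mem_filter, Finset.mem_insert]
      constructor
      · rintro ⟨hx, hle⟩
        rcases Nat.eq_or_lt_of_le hle with h1 | h1
        · exact Or.inl h1
        · exact Or.inr ⟨hx, by omega⟩
      · rintro (rfl | ⟨hx, hle⟩)
        · exact ⟨hmem, le_refl _⟩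
        · exact ⟨hx, by omega⟩
    have hcnt : σ (u+1) = σ u + 1 := by
      simp only [hσdef, heq]
      rw [Finset.card_insert_of_notMem (by simp)]
    omega
  set T₁ : Finset ℕ :=
    insert (af-1) ((Finset.range (N+1)).filter (fun i => σ i % 2 = 1 ∧ i ≠ e)) with hT₁def
  set T₂ : Finset ℕ :=
    insert b ((Finset.range (N+1)).filter (fun i => σ i % 2 = 0)) with hT₂def
  have hT₁sub : T₁ ⊆ Finset.range (N+1) := by
    apply Finset.insert_subset
    · simp only [Finset.mem_range]; omega
    · exact Finset.filter_subset _ _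
  have hT₂sub : T₂ ⊆ Finset.range (N+1) := by
    apply Finset.insert_subset
    · simp only [Finset.mem_range]; omega
    · exact Finset.filter_subset _ _
  refine ⟨T₁, T₂, hT₁sub, hT₂sub, ?_, ?_, ?_⟩
  · -- cover
    intro i hi
    rcases Nat.mod_two_eq_zero_or_one (σ i) with h | h
    · exact Finset.mem_union_right _ (Finset.mem_insert_of_mem (Finset.mem_filter.mpr ⟨hi, h⟩))
    · by_cases hie : i = e
      · subst hie
        rcases he_cov with hc | hc
        · exfalso
          have : σ i % 2 = 0 := hc
          omega
        · subst hc
          exact Finset.mem_union_right _ (Finset.mem_insert_self _ _)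
      · exact Finset.mem_union_left _ (Finset.mem_insert_of_mem (Finset.mem_filter.mpr ⟨hi, h, hie⟩))
  · -- T₁ hyper-monolithic (first-type)
    intro c hc
    have haf_ne_e : af ≠ e := Ne.symm he_af
    apply stmt7_hm_first N k c T₁ hT₁sub hk hc (af-1) (Finset.mem_insert_self _ _) ?_ ?_ ?_
    · -- a+1 = af ∈ T₁
      have : (af - 1) + 1 = af := by omega
      rw [this]
      apply Finset.mem_insert_of_mem
      refine Finset.mem_filter.mpr ⟨by simp only [Finset.mem_range]; omega, by rw [hσ_af], haf_ne_e⟩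
    · -- min
      intro i hiT
      rcases Finset.mem_insert.mp hiT with rfl | hi
      · exact le_refl _
      · have := hσ_low i (Finset.mem_filter.mp hi).2.1
        omega
    · -- gap
      intro u v hu hv hau huv
      have haf1' : (af - 1) + 1 = af := by omega
      rw [haf1', hafgap]
      have hune : u ≠ af - 1 := by omega
      have hvne : v ≠ af - 1 := by omega
      have hu' := Finset.mem_filter.mp (Finset.mem_insert.mp hu |>.resolve_left hune)
      have hv' := Finset.mem_filter.mp (Finset.mem_insert.mp hv |>.resolve_left hvne)
      have hvN : v ≤ N := by
        have := hv'.1; simp only [Finset.mem_range] at this; omega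
      rcases Nat.lt_or_ge (u+1) v with hcase | hcase
      · exact stmt7_skip_lt N k d hd_le hdpos u v (by omega) hvN
      · have hveq : v = u + 1 := by omega
        have hnotF : v ∉ F := by
          have := hadj u (by rw [← hveq, hu'.2.1, hv'.2.1])
          rw [hveq]; exact this
        have hne : k (v-1) - k v ≠ d := by
          intro hd'
          obtain ⟨hv1, -⟩ := hEF v (by omega) hvN hd' hnotF
          exact hu'.2.2 (by omega)
        have hge : d ≤ k (v-1) - k v := hd_le v (by omega) hvN
        have huveq : u = v - 1 := by omega
        rw [huveq]
        exact lt_of_le_of_ne hge (Ne.symm hne)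
  · -- T₂ hyper-monolithic (last-type)
    intro c hc
    apply stmt7_hm_last N k c T₂ hT₂sub hk hc b hb1 (Finset.mem_insert_self _ _) ?_ ?_ ?_
    · -- b - 1 ∈ T₂
      apply Finset.mem_insert_of_mem
      refine Finset.mem_filter.mpr ⟨by simp only [Finset.mem_range]; omega, ?_⟩
      rw [hσ_bm1]; omega
    · -- max
      intro i hiT
      rcases Finset.mem_insert.mp hiT with rfl | hi
      · exact le_refl _
      · by_contra hgt
        push_neg at hgt
        have := hσ_top i (by omega)
        have h2 := (Finset.mem_filter.mp hi).2
        omega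
    · -- gap
      intro u v hu hv huv hvb
      rw [hbgap]
      have hune : u ≠ b := by omega
      have hvne : v ≠ b := by omega
      have hu' := Finset.mem_filter.mp (Finset.mem_insert.mp hu |>.resolve_left hune)
      have hv' := Finset.mem_filter.mp (Finset.mem_insert.mp hv |>.resolve_left hvne)
      have hvN : v ≤ N := by
        have := hv'.1; simp only [Finset.mem_range] at this; omega
      rcases Nat.lt_or_ge (u+1) v with hcase | hcase
      · exact stmt7_skip_lt N k d hd_le hdpos u v (by omega) hvN
      · have hveq : v = u + 1 := by omega
        have hnotF : v ∉ F := by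
          have := hadj u (by rw [← hveq, hu'.2, hv'.2])
          rw [hveq]; exact this
        have hne : k (v-1) - k v ≠ d := by
          intro hd'
          obtain ⟨hv1, hb'⟩ := hEF v (by omega) hvN hd' hnotF
          omega
        have hge : d ≤ k (v-1) - k v := hd_le v (by omega) hvN
        have huveq : u = v - 1 := by omega
        rw [huveq]
        exact lt_of_le_of_ne hge (Ne.symm hne)

lemma stmt7_key (N : ℕ) (hN : 2 ≤ N) (k : ℕ → ℤ)
    (hk : ∀ i j : ℕ, i < j → j ≤ N → k j < k i) :
    ∃ T₁ T₂ : Finset ℕ, T₁ ⊆ Finset.range (N+1) ∧ T₂ ⊆ Finset.range (N+1) ∧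
      Finset.range (N+1) ⊆ T₁ ∪ T₂ ∧
      (∀ c : ℕ → ℕ, (∀ i ∈ T₁, 0 < c i) → HyperMonolithic (∑ i ∈ T₁, mono (k i) (c i))) ∧
      (∀ c : ℕ → ℕ, (∀ i ∈ T₂, 0 < c i) → HyperMonolithic (∑ i ∈ T₂, mono (k i) (c i))) := by
  classical
  obtain ⟨i₀, hi₀mem, hi₀min⟩ :=
    Finset.exists_min_image (Finset.Icc 1 N) (fun i => k (i-1) - k i)
      ⟨1, by simp only [Finset.mem_Icc]; omega⟩
  simp only [Finset.mem_Icc] at hi₀mem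
  set d := k (i₀ - 1) - k i₀ with hd
  have hd_le : ∀ i, 1 ≤ i → i ≤ N → d ≤ k (i-1) - k i := by
    intro i h1 h2
    exact hi₀min i (by simp only [Finset.mem_Icc]; omega)
  have hdpos : 0 < d := sub_pos.mpr (hk (i₀-1) i₀ (by omega) (by omega))
  set E := (Finset.Icc 1 N).filter (fun i => k (i-1) - k i = d) with hE
  have hEne : E.Nonempty :=
    ⟨i₀, by simp only [hE, Finset.mem_filter, Finset.mem_Icc]; exact ⟨⟨hi₀mem.1, hi₀mem.2⟩, rfl⟩⟩
  have hEmem : ∀ i ∈ E, 1 ≤ i ∧ i ≤ N ∧ k (i-1) - k i = d := by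
    intro i hi
    simp only [hE, Finset.mem_filter, Finset.mem_Icc] at hi
    exact ⟨hi.1.1, hi.1.2, hi.2⟩
  have hmemE : ∀ i, 1 ≤ i → i ≤ N → k (i-1) - k i = d → i ∈ E := by
    intro i h1 h2 h3
    simp only [hE, Finset.mem_filter, Finset.mem_Icc]
    exact ⟨⟨h1, h2⟩, h3⟩
  set qf := E.min' hEne with hqf
  set qr := E.max' hEne with hqr
  have hqfE : qf ∈ E := E.min'_mem hEne
  have hqrE : qr ∈ E := E.max'_mem hEne
  obtain ⟨hqf1, hqfN, hqfd⟩ := hEmem qf hqfE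
  obtain ⟨hqr1, hqrN, hqrd⟩ := hEmem qr hqrE
  have hfr : qf ≤ qr := Finset.min'_le E qr hqrE
  by_cases hodd : E.card % 2 = 1
  · -- Case A
    refine stmt7_pair_core N k d hd_le hdpos hk E qf qr 0 hqfE hqrE
      (fun y hy => Finset.min'_le E y hy) (fun y hy => Finset.le_max' E y hy)
      hodd hqf1 hqfN hqrN hqfd hqrd ?_ (by omega) (Or.inl ?_)
    · intro v h1 h2 h3 hv
      exact absurd (hmemE v h1 h2 h3) hv
    · have : E.filter (fun x => x ≤ 0) = ∅ :=
        Finset.filter_eq_empty_iff.mpr (fun {x} hx h0 => by have := (hEmem x hx).1; omega)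
      rw [this]; simp
  · have heven : E.card % 2 = 0 := by omega
    have hcard1 : 1 ≤ E.card := Finset.card_pos.mpr hEne
    have hcard2 : 2 ≤ E.card := by omega
    have hflt : qf < qr := Finset.min'_lt_max'_of_card E (by omega)
    by_cases hb' : qr - 1 ∈ E
    · by_cases hD : qr - 1 = qf
      · -- Case D : qr = qf + 1
        have hqr_eq : qr = qf + 1 := by omega
        have hEsub : ∀ y ∈ E, y = qf ∨ y = qf + 1 := by
          intro y hy
          have h1 := Finset.min'_le E y hy
          have h2 := Finset.le_max' E y hy
          omega
        have hsub1 : Finset.Icc qf N ⊆ Finset.range (N+1) := by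
          intro x hx
          simp only [Finset.mem_Icc] at hx
          simp only [Finset.mem_range]; omega
        have hsub2 : Finset.Icc 0 qf ⊆ Finset.range (N+1) := by
          intro x hx
          simp only [Finset.mem_Icc] at hx
          simp only [Finset.mem_range]; omega
        refine ⟨Finset.Icc qf N, Finset.Icc 0 qf, hsub1, hsub2, ?_, ?_, ?_⟩
        · intro i hi
          simp only [Finset.mem_range] at hi
          simp only [Finset.mem_union, Finset.mem_Icc]
          omega
        · intro c hc
          apply stmt7_hm_first N k c _ hsub1 hk hc qf ?_ ?_ ?_ ?_
          · simp only [Finset.mem_Icc]; omega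
          · simp only [Finset.mem_Icc]; omega
          · intro i hi
            simp only [Finset.mem_Icc] at hi
            omega
          · intro u v hu hv hqu huv
            simp only [Finset.mem_Icc] at hu hv
            have hgap0 : k qf - k (qf+1) = d := by
              have h := hqrd
              rw [hqr_eq] at h
              simpa using h
            rw [hgap0]
            rcases Nat.lt_or_ge (u+1) v with hcase | hcase
            · exact stmt7_skip_lt N k d hd_le hdpos u v (by omega) hv.2
            · have hveq : v = u + 1 := by omega
              have hvE : v ∉ E := by
                intro hvE'
                rcases hEsub v hvE' with h | h <;> omega
              have hne : k (v-1) - k v ≠ d := fun h => hvE (hmemE v (by omega) hv.2 h)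
              have hge : d ≤ k (v-1) - k v := hd_le v (by omega) hv.2
              have huveq : u = v - 1 := by omega
              rw [huveq]
              exact lt_of_le_of_ne hge (Ne.symm hne)
        · intro c hc
          apply stmt7_hm_last N k c _ hsub2 hk hc qf hqf1 ?_ ?_ ?_ ?_
          · simp only [Finset.mem_Icc]; omega
          · simp only [Finset.mem_Icc]; omega
          · intro i hi
            simp only [Finset.mem_Icc] at hi
            omega
          · intro u v hu hv huv hvb
            simp only [Finset.mem_Icc] at hu hv
            rw [hqfd]
            rcases Nat.lt_or_ge (u+1) v with hcase | hcase
            · exact stmt7_skip_lt N k d hd_le hdpos u v (by omega) (by omega)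
            · have hveq : v = u + 1 := by omega
              have hvE : v ∉ E := by
                intro hvE'
                have := Finset.min'_le E v hvE'
                omega
              have hne : k (v-1) - k v ≠ d := fun h => hvE (hmemE v (by omega) (by omega) h)
              have hge : d ≤ k (v-1) - k v := hd_le v (by omega) (by omega)
              have huveq : u = v - 1 := by omega
              rw [huveq]
              exact lt_of_le_of_ne hge (Ne.symm hne)
      · -- Case C : F = E.erase qr, anchors qf and qr-1, exclusion e = qr-1
        refine stmt7_pair_core N k d hd_le hdpos hk (E.erase qr) qf (qr-1) (qr-1)
          (Finset.mem_erase.mpr ⟨by omega, hqfE⟩)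
          (Finset.mem_erase.mpr ⟨by omega, hb'⟩)
          (fun y hy => Finset.min'_le E y (Finset.mem_of_mem_erase hy))
          (fun y hy => ?_) ?_ hqf1 hqfN (by omega) hqfd ?_ ?_ (by omega) (Or.inr rfl)
        · have h1 := Finset.le_max' E y (Finset.mem_of_mem_erase hy)
          have h2 := (Finset.mem_erase.mp hy).1
          omega
        · rw [Finset.card_erase_of_mem hqrE]; omega
        · exact (hEmem (qr-1) hb').2.2
        · intro v h1 h2 h3 hv
          have hvE := hmemE v h1 h2 h3
          have hveq : v = qr := by
            by_contra hne
            exact hv (Finset.mem_erase.mpr ⟨hne, hvE⟩)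
          constructor
          · omega
          · rfl
    · -- Case B : F = insert (qr-1) E
      have hrm1 : 1 ≤ qr - 1 := by omega
      refine stmt7_pair_core N k d hd_le hdpos hk (insert (qr-1) E) qf qr 0
        (Finset.mem_insert_of_mem hqfE)
        (Finset.mem_insert_of_mem hqrE)
        (fun y hy => ?_) (fun y hy => ?_) ?_ hqf1 hqfN hqrN hqfd hqrd ?_ (by omega) (Or.inl ?_)
      · rcases Finset.mem_insert.mp hy with rfl | hy'
        · omega
        · exact Finset.min'_le E y hy'
      · rcases Finset.mem_insert.mp hy with rfl | hy'
        · omega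
        · exact Finset.le_max' E y hy'
      · rw [Finset.card_insert_of_notMem hb']; omega
      · intro v h1 h2 h3 hv
        exact absurd (Finset.mem_insert_of_mem (hmemE v h1 h2 h3)) hv
      · have : (insert (qr-1) E).filter (fun x => x ≤ 0) = ∅ := by
          apply Finset.filter_eq_empty_iff.mpr
          intro x hx h0
          rcases Finset.mem_insert.mp hx with rfl | hx'
          · omega
          · have := (hEmem x hx').1; omega
        rw [this]; simp

/-- Any `f` with at least three terms splits as `g + h` with `g` hyper-monolithic
and `h(1) ≤ g(1)`. -/
theorem stmt7 (f : NL) (hsupp : 3 ≤ f.coeff.support.card) :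
    ∃ g h : NL, f = g + h ∧ HyperMonolithic g ∧ evalOne h ≤ evalOne g := by
  classical
  obtain ⟨N, k, hN, hk, hmem, hsum⟩ := stmt7_setup f hsupp
  obtain ⟨T₁, T₂, hT₁, hT₂, hcov, hHM₁, hHM₂⟩ := stmt7_key N hN k hk
  set c : ℕ → ℕ := fun i => f.coeff (k i) with hcdef
  have hcpos : ∀ i, i ≤ N → 0 < c i := by
    intro i hi
    have := Finsupp.mem_support_iff.mp (hmem i hi)
    exact Nat.pos_of_ne_zero this
  have hcpos₁ : ∀ i ∈ T₁, 0 < c i := by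
    intro i hi
    have := hT₁ hi
    simp only [Finset.mem_range] at this
    exact hcpos i (by omega)
  have hcpos₂ : ∀ i ∈ T₂, 0 < c i := by
    intro i hi
    have := hT₂ hi
    simp only [Finset.mem_range] at this
    exact hcpos i (by omega)
  have hwsum : ∑ i ∈ Finset.range (N+1), c i ≤ ∑ i ∈ T₁, c i + ∑ i ∈ T₂, c i := by
    calc ∑ i ∈ Finset.range (N+1), c i
        ≤ ∑ i ∈ T₁ ∪ T₂, c i := Finset.sum_le_sum_of_subset hcov
      _ ≤ ∑ i ∈ T₁, c i + ∑ i ∈ T₂, c i := by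
          rw [← Finset.sum_union_inter]
          omega
  -- pick the heavier side
  rcases le_total (∑ i ∈ T₂, c i) (∑ i ∈ T₁, c i) with hch | hch
  · refine ⟨∑ i ∈ T₁, mono (k i) (c i), ∑ i ∈ Finset.range (N+1) \ T₁, mono (k i) (c i),
      ?_, hHM₁ c hcpos₁, ?_⟩
    · rw [hsum, ← Finset.sum_sdiff hT₁]
      exact (add_comm _ _)
    · rw [stmt7_evalOne_sum, stmt7_evalOne_sum]
      have hsd : ∑ i ∈ Finset.range (N+1) \ T₁, c i + ∑ i ∈ T₁, c i
          = ∑ i ∈ Finset.range (N+1), c i := Finset.sum_sdiff hT₁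
      omega
  · refine ⟨∑ i ∈ T₂, mono (k i) (c i), ∑ i ∈ Finset.range (N+1) \ T₂, mono (k i) (c i),
      ?_, hHM₂ c hcpos₂, ?_⟩
    · rw [hsum, ← Finset.sum_sdiff hT₂]
      exact (add_comm _ _)
    · rw [stmt7_evalOne_sum, stmt7_evalOne_sum]
      have hsd : ∑ i ∈ Finset.range (N+1) \ T₂, c i + ∑ i ∈ T₂, c i
          = ∑ i ∈ Finset.range (N+1), c i := Finset.sum_sdiff hT₂
      omega
end

section
/- For every integer k ≥ 2, the polynomial x^k + x^{k−1} + ⋯ + x ∈ ℕ[x] cannot be expressed as the sum of two irreducible elements of the semiring ℕ[x] of polynomials with nonnegative integer coefficients. -/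
open Polynomial

lemma eq_X_of_irreducible (g : Polynomial ℕ) (hg : Irreducible g) (h0 : g.coeff 0 = 0) :
    g = Polynomial.X := by
  obtain ⟨g', rfl⟩ := Polynomial.X_dvd_iff.2 h0
  rcases hg.isUnit_or_isUnit rfl with hX | hu
  · exact absurd hX Polynomial.not_isUnit_X
  · obtain ⟨r, hr, rfl⟩ := Polynomial.isUnit_iff.1 hu
    rw [Nat.isUnit_iff.1 hr]
    simp

/-- For every `k ≥ 2`, the polynomial `x^k + ⋯ + x ∈ ℕ[x]` is not a sum of two
irreducibles of the semiring of polynomials with nonnegative integer coefficients. -/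
theorem stmt10 (k : ℕ) (hk : 2 ≤ k) :
    ¬ ∃ g h : Polynomial ℕ, Irreducible g ∧ Irreducible h ∧
      (∑ i ∈ Finset.Icc 1 k, Polynomial.X ^ i) = g + h := by
  rintro ⟨g, h, hg, hh, heq⟩
  have h0 : (g + h).coeff 0 = 0 := by
    rw [← heq, Polynomial.finset_sum_coeff]
    apply Finset.sum_eq_zero
    intro i hi
    rw [Polynomial.coeff_X_pow]
    simp only [Finset.mem_Icc] at hi
    simp; omega
  rw [Polynomial.coeff_add] at h0
  have hg0 : g.coeff 0 = 0 := by omega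
  have hh0 : h.coeff 0 = 0 := by omega
  rw [eq_X_of_irreducible g hg hg0, eq_X_of_irreducible h hh hh0] at heq
  have := congrArg (fun p => Polynomial.coeff p 2) heq
  simp only [Polynomial.finset_sum_coeff, Polynomial.coeff_X_pow, Polynomial.coeff_add,
    Polynomial.coeff_X] at this
  rw [Finset.sum_ite_eq (Finset.Icc 1 k) 2 (fun _ => 1)] at this
  simp [Finset.mem_Icc, hk] at this
end
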